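/- (First-Bianchi-type relation between the ideal order-4 tensors.) In the chart model, let iR_4 and iT_4 be the (1,4)-tensor fields defined pointwise by iR_4(x_1,x_2,x_3,x_4) := (∇_{x_1}R)(x_2,x_3)(x_4) + (1/2)[R(T(x_1,x_2),x_3)(x_4) + R(x_2,T(x_1,x_3))(x_4)] − (1/2)[T(R(x_2,x_3)(x_1),x_4) + T((∇_{x_1}T)(x_2,x_3),x_4) + T(T(T(x_2,x_3),x_1),x_4)] + (1/4)[−2(∇_{x_1}T)(T(x_2,x_3),x_4) − (∇_{x_2}T)(T(x_1,x_3),x_4) + (∇_{x_3}T)(T(x_1,x_2),x_4)] + (1/8)[T(T(x_3,x_4),T(x_1,x_2)) − T(T(x_2,x_4),T(x_1,x_3)) + 2T(T(x_2,x_3),T(x_1,x_4))], and iT_4(x_1,x_2,x_3,x_4) := (1/2)[(∇_{x_1}∇_{x_2}T)(x_3,x_4) + (∇_{x_2}∇_{x_1}T)(x_3,x_4)] − (1/4)[R(x_1,x_3)(T(x_4,x_2)) + R(x_2,x_3)(T(x_4,x_1)) − R(x_1,x_4)(T(x_3,x_2)) − R(x_2,x_4)(T(x_3,x_1))] + (3/4)[(∇_{x_1}T)(T(x_2,x_3),x_4)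 + (∇_{x_2}T)(T(x_1,x_3),x_4) − (∇_{x_1}T)(T(x_2,x_4),x_3) − (∇_{x_2}T)(T(x_1,x_4),x_3)] + (1/2)[T((∇_{x_1}T)(x_2,x_3),x_4) + T((∇_{x_2}T)(x_1,x_3),x_4) − T((∇_{x_1}T)(x_2,x_4),x_3) − T((∇_{x_2}T)(x_1,x_4),x_3)]. Then at every point p ∈ E and for all x_1,…,x_4 ∈ E, the cyclic sums over the three cyclic permutations σ of (x_2,x_3,x_4) satisfy Σ_cyc iR_4(x_1,σ(x_2),σ(x_3),σ(x_4)) = − Σ_cyc iT_4(x_1,σ(x_2),σ(x_3),σ(x_4)) (identity (aa) for n = 4). -/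

import Mathlib

set_option maxHeartbeats 0


noncomputable section

/- Chart model of a linear connection with torsion: `E` is a finite-dimensional real
normed vector space and `Γ : E → (E →L[ℝ] E →L[ℝ] E)` a smooth Christoffel map.  Below:
`Tor` is the torsion, `Curv` the curvature (with the sign convention
`R(X,Y)Z = ∇_{[X,Y]}Z − [∇_X,∇_Y]Z`), and `covDer2`, `covDer3` the covariant derivatives
of (1,2)- and (1,3)-tensor fields. -/

variable {E : Type*} [NormedAddCommGroup E] [NormedSpace ℝ E] [FiniteDimensional ℝ E]

/-- The torsion `T(p)(u,v) := Γ(p)(u)(v) − Γ(p)(v)(u)`. -/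
def Tor (Γ : E → (E →L[ℝ] E →L[ℝ] E)) (p u v : E) : E :=
  Γ p u v - Γ p v u

/-- The curvature
`R(p)(u,v)(w) := −(DΓ)(p)(u)(v)(w) + (DΓ)(p)(v)(u)(w) − Γ(p)(u)(Γ(p)(v)(w)) + Γ(p)(v)(Γ(p)(u)(w))`. -/
def Curv (Γ : E → (E →L[ℝ] E →L[ℝ] E)) (p u v w : E) : E :=
  -(fderiv ℝ Γ p u v w) + fderiv ℝ Γ p v u w - Γ p u (Γ p v w) + Γ p v (Γ p u w)

/-- The covariant derivative of a (1,2)-tensor field: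
`(∇A)(p)(x)(z₁,z₂) := (DA)(p)(x)(z₁,z₂) + Γ(p)(x)(A(p)(z₁,z₂)) − A(p)(Γ(p)(x)(z₁),z₂)
− A(p)(z₁,Γ(p)(x)(z₂))`. -/
def covDer2 (Γ : E → (E →L[ℝ] E →L[ℝ] E)) (A : E → E → E → E) (p x z₁ z₂ : E) : E :=
  fderiv ℝ (fun q => A q z₁ z₂) p x + Γ p x (A p z₁ z₂)
    - A p (Γ p x z₁) z₂ - A p z₁ (Γ p x z₂)

/-- The covariant derivative of a (1,3)-tensor field. -/
def covDer3 (Γ : E → (E →L[ℝ] E →L[ℝ] E)) (A : E → E → E → E → E) (p x z₁ z₂ z₃ : E) : E :=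
  fderiv ℝ (fun q => A q z₁ z₂ z₃) p x + Γ p x (A p z₁ z₂ z₃)
    - A p (Γ p x z₁) z₂ z₃ - A p z₁ (Γ p x z₂) z₃ - A p z₁ z₂ (Γ p x z₃)

/-- The symmetrized Christoffel map `Γ̃(p)(u)(v) := (1/2)(Γ(p)(u)(v) + Γ(p)(v)(u))`. -/
def symmGamma (Γ : E → (E →L[ℝ] E →L[ℝ] E)) : E → (E →L[ℝ] E →L[ℝ] E) :=
  fun p => (2 : ℝ)⁻¹ • (Γ p + (Γ p).flip)

/-- The ideal curvature tensor in order 4 (the point `p` is the first argument). -/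
def iR4 (Γ : E → (E →L[ℝ] E →L[ℝ] E)) (p x₁ x₂ x₃ x₄ : E) : E :=
  covDer3 Γ (Curv Γ) p x₁ x₂ x₃ x₄
    + (2 : ℝ)⁻¹ • (Curv Γ p (Tor Γ p x₁ x₂) x₃ x₄ + Curv Γ p x₂ (Tor Γ p x₁ x₃) x₄)
    - (2 : ℝ)⁻¹ • (Tor Γ p (Curv Γ p x₂ x₃ x₁) x₄
        + Tor Γ p (covDer2 Γ (Tor Γ) p x₁ x₂ x₃) x₄
        + Tor Γ p (Tor Γ p (Tor Γ p x₂ x₃) x₁) x₄)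
    + (4 : ℝ)⁻¹ • (-((2 : ℝ) • covDer2 Γ (Tor Γ) p x₁ (Tor Γ p x₂ x₃) x₄)
        - covDer2 Γ (Tor Γ) p x₂ (Tor Γ p x₁ x₃) x₄
        + covDer2 Γ (Tor Γ) p x₃ (Tor Γ p x₁ x₂) x₄)
    + (8 : ℝ)⁻¹ • (Tor Γ p (Tor Γ p x₃ x₄) (Tor Γ p x₁ x₂)
        - Tor Γ p (Tor Γ p x₂ x₄) (Tor Γ p x₁ x₃)
        + (2 : ℝ) • Tor Γ p (Tor Γ p x₂ x₃) (Tor Γ p x₁ x₄))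

/-- The ideal torsion tensor in order 4 (the point `p` is the first argument). -/
def iT4 (Γ : E → (E →L[ℝ] E →L[ℝ] E)) (p x₁ x₂ x₃ x₄ : E) : E :=
  (2 : ℝ)⁻¹ • (covDer3 Γ (covDer2 Γ (Tor Γ)) p x₁ x₂ x₃ x₄
      + covDer3 Γ (covDer2 Γ (Tor Γ)) p x₂ x₁ x₃ x₄)
    - (4 : ℝ)⁻¹ • (Curv Γ p x₁ x₃ (Tor Γ p x₄ x₂) + Curv Γ p x₂ x₃ (Tor Γ p x₄ x₁)
        - Curv Γ p x₁ x₄ (Tor Γ p x₃ x₂) - Curv Γ p x₂ x₄ (Tor Γ p x₃ x₁))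
    + (3 / 4 : ℝ) • (covDer2 Γ (Tor Γ) p x₁ (Tor Γ p x₂ x₃) x₄
        + covDer2 Γ (Tor Γ) p x₂ (Tor Γ p x₁ x₃) x₄
        - covDer2 Γ (Tor Γ) p x₁ (Tor Γ p x₂ x₄) x₃
        - covDer2 Γ (Tor Γ) p x₂ (Tor Γ p x₁ x₄) x₃)
    + (2 : ℝ)⁻¹ • (Tor Γ p (covDer2 Γ (Tor Γ) p x₁ x₂ x₃) x₄
        + Tor Γ p (covDer2 Γ (Tor Γ) p x₂ x₁ x₃) x₄
        - Tor Γ p (covDer2 Γ (Tor Γ) p x₁ x₂ x₄) x₃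
        - Tor Γ p (covDer2 Γ (Tor Γ) p x₂ x₁ x₄) x₃)


section AuxLemmas
set_option linter.unusedSectionVars false
variable {E : Type*} [NormedAddCommGroup E] [NormedSpace ℝ E] [FiniteDimensional ℝ E]
variable {Γ : E → (E →L[ℝ] E →L[ℝ] E)}

lemma aux_diffG (hΓ : ContDiff ℝ (⊤ : ℕ∞) Γ) : Differentiable ℝ Γ :=
  hΓ.differentiable (by
    simp)

lemma aux_diffD (hΓ : ContDiff ℝ (⊤ : ℕ∞) Γ) : Differentiable ℝ (fderiv ℝ Γ) :=
  (hΓ.fderiv_right (m := (⊤ : ℕ∞)) (by exact_mod_cast le_refl _)).differentiable (by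
    simp)

lemma aux_symmDD (hΓ : ContDiff ℝ (⊤ : ℕ∞) Γ) (p a b : E) :
    fderiv ℝ (fderiv ℝ Γ) p a b = fderiv ℝ (fderiv ℝ Γ) p b a :=
  (hΓ.contDiffAt.isSymmSndFDerivAt (n := (⊤:ℕ∞)) (by
    simp
    exact WithTop.coe_le_coe.2 (le_top : (2:ℕ∞) ≤ ⊤))).eq a b

lemma aux_m1 (hΓ : ContDiff ℝ (⊤ : ℕ∞) Γ) (p u v : E) :
    HasFDerivAt (fun q => Γ q u v)
      ((Γ p u).comp (0 : E →L[ℝ] E) +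
        (((Γ p).comp (0 : E →L[ℝ] E) + (fderiv ℝ Γ p).flip u).flip v)) p :=
  (((aux_diffG hΓ) p).hasFDerivAt.clm_apply (hasFDerivAt_const u p)).clm_apply
    (hasFDerivAt_const v p)

lemma aux_m4 (hΓ : ContDiff ℝ (⊤ : ℕ∞) Γ) (p u v w : E) :
    HasFDerivAt (fun q => fderiv ℝ Γ q u v w)
      ((fderiv ℝ Γ p u v).comp (0 : E →L[ℝ] E) +
        (((fderiv ℝ Γ p u).comp (0 : E →L[ℝ] E) +
          (((fderiv ℝ Γ p).comp (0 : E →L[ℝ] E) +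
            ContinuousLinearMap.flip (𝕜 := ℝ) (𝕜₂ := ℝ) (𝕜₃ := ℝ) (σ₁₃ := RingHom.id ℝ)
              (σ₂₃ := RingHom.id ℝ) (E := E) (F := E) (G := E →L[ℝ] E →L[ℝ] E)
              (fderiv ℝ (fderiv ℝ Γ) p) u).flip v)).flip w)) p :=
  ((((aux_diffD hΓ) p).hasFDerivAt.clm_apply (𝕜 := ℝ) (G := E) (H := E →L[ℝ] E →L[ℝ] E)
      (c := fderiv ℝ Γ) (hasFDerivAt_const u p)).clm_apply
      (hasFDerivAt_const v p)).clm_apply (hasFDerivAt_const w p)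

lemma aux_m2 (hΓ : ContDiff ℝ (⊤ : ℕ∞) Γ) (p u v w : E) :
    HasFDerivAt (fun q => Γ q u (Γ q v w))
      ((Γ p u).comp ((Γ p v).comp (0 : E →L[ℝ] E) +
          (((Γ p).comp (0 : E →L[ℝ] E) + (fderiv ℝ Γ p).flip v).flip w)) +
        (((Γ p).comp (0 : E →L[ℝ] E) + (fderiv ℝ Γ p).flip u).flip (Γ p v w))) p :=
  (((aux_diffG hΓ) p).hasFDerivAt.clm_apply (hasFDerivAt_const u p)).clm_apply (aux_m1 hΓ p v w)

lemma aux_m3 (hΓ : ContDiff ℝ (⊤ : ℕ∞) Γ) (p u v w : E) :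
    HasFDerivAt (fun q => Γ q (Γ q u v) w)
      ((Γ p (Γ p u v)).comp (0 : E →L[ℝ] E) +
        (((Γ p).comp ((Γ p u).comp (0 : E →L[ℝ] E) +
            (((Γ p).comp (0 : E →L[ℝ] E) + (fderiv ℝ Γ p).flip u).flip v)) +
          (fderiv ℝ Γ p).flip (Γ p u v)).flip w)) p :=
  (((aux_diffG hΓ) p).hasFDerivAt.clm_apply (aux_m1 hΓ p u v)).clm_apply (hasFDerivAt_const w p)

lemma aux_dTor (hΓ : ContDiff ℝ (⊤ : ℕ∞) Γ) (p a u v : E) :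
    fderiv ℝ (fun q => Tor Γ q u v) p a = fderiv ℝ Γ p a u v - fderiv ℝ Γ p a v u := by
  have e : fderiv ℝ (fun q => Tor Γ q u v) p = _ :=
    ((aux_m1 hΓ p u v).sub (aux_m1 hΓ p v u)).fderiv
  rw [e]; simp

lemma aux_dCurv (hΓ : ContDiff ℝ (⊤ : ℕ∞) Γ) (p a u v w : E) :
    fderiv ℝ (fun q => Curv Γ q u v w) p a =
      -(fderiv ℝ (fderiv ℝ Γ) p a u v w) + fderiv ℝ (fderiv ℝ Γ) p a v u w
      - fderiv ℝ Γ p a u (Γ p v w) - Γ p u (fderiv ℝ Γ p a v w)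
      + fderiv ℝ Γ p a v (Γ p u w) + Γ p v (fderiv ℝ Γ p a u w) := by
  have e : fderiv ℝ (fun q => Curv Γ q u v w) p = _ :=
    ((((aux_m4 hΓ p u v w).neg.add (aux_m4 hΓ p v u w)).sub (aux_m2 hΓ p u v w)).add
      (aux_m2 hΓ p v u w)).fderiv
  rw [e]; simp; abel

lemma aux_dC2T (hΓ : ContDiff ℝ (⊤ : ℕ∞) Γ) (p a x u v : E) :
    fderiv ℝ (fun q => covDer2 Γ (Tor Γ) q x u v) p a =
      fderiv ℝ (fderiv ℝ Γ) p a x u v - fderiv ℝ (fderiv ℝ Γ) p a x v u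
      + (fderiv ℝ Γ p a x (Γ p u v) + Γ p x (fderiv ℝ Γ p a u v)
          - fderiv ℝ Γ p a x (Γ p v u) - Γ p x (fderiv ℝ Γ p a v u))
      - (fderiv ℝ Γ p a (Γ p x u) v + Γ p (fderiv ℝ Γ p a x u) v
          - fderiv ℝ Γ p a v (Γ p x u) - Γ p v (fderiv ℝ Γ p a x u))
      - (fderiv ℝ Γ p a u (Γ p x v) + Γ p u (fderiv ℝ Γ p a x v)
          - fderiv ℝ Γ p a (Γ p x v) u - Γ p (fderiv ℝ Γ p a x v) u) := by
  have e1 : (fun q => covDer2 Γ (Tor Γ) q x u v)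
      = fun q => (fderiv ℝ Γ q x u v - fderiv ℝ Γ q x v u
          + (Γ q x (Γ q u v) - Γ q x (Γ q v u))
          - (Γ q (Γ q x u) v - Γ q v (Γ q x u)))
          - (Γ q u (Γ q x v) - Γ q (Γ q x v) u) := by
    funext q
    simp only [covDer2]
    simp only [aux_dTor hΓ]
    simp only [Tor, map_sub]
  have e2 : fderiv ℝ (fun q => (fderiv ℝ Γ q x u v - fderiv ℝ Γ q x v u
          + (Γ q x (Γ q u v) - Γ q x (Γ q v u))
          - (Γ q (Γ q x u) v - Γ q v (Γ q x u)))
          - (Γ q u (Γ q x v) - Γ q (Γ q x v) u)) p = _ :=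
    (((((aux_m4 hΓ p x u v).sub (aux_m4 hΓ p x v u)).add
        ((aux_m2 hΓ p x u v).sub (aux_m2 hΓ p x v u))).sub
        ((aux_m3 hΓ p x u v).sub (aux_m2 hΓ p v x u))).sub
        ((aux_m2 hΓ p u x v).sub (aux_m3 hΓ p x v u))).fderiv
  rw [e1, e2]; simp; abel

end AuxLemmas

/-- the first-Bianchi-type relation (aa) between the ideal order-4 tensors:
the cyclic sums over the cyclic permutations of `(x₂,x₃,x₄)` satisfy
`Σ_cyc iR₄(x₁,·,·,·) = − Σ_cyc iT₄(x₁,·,·,·)`. -/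
theorem statement16 (Γ : E → (E →L[ℝ] E →L[ℝ] E)) (hΓ : ContDiff ℝ (⊤ : ℕ∞) Γ)
    (p x₁ x₂ x₃ x₄ : E) :
    iR4 Γ p x₁ x₂ x₃ x₄ + iR4 Γ p x₁ x₃ x₄ x₂ + iR4 Γ p x₁ x₄ x₂ x₃
      = -(iT4 Γ p x₁ x₂ x₃ x₄ + iT4 Γ p x₁ x₃ x₄ x₂ + iT4 Γ p x₁ x₄ x₂ x₃) := by
  simp only [iR4, iT4, covDer3]
  simp only [aux_dCurv hΓ, aux_dC2T hΓ]
  simp only [covDer2]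
  simp only [aux_dTor hΓ]
  simp only [Curv, Tor]
  simp only [map_add, map_sub, map_neg, map_smul, ContinuousLinearMap.add_apply,
    ContinuousLinearMap.sub_apply, ContinuousLinearMap.neg_apply, ContinuousLinearMap.smul_apply,
    smul_add, smul_sub, smul_neg]
  simp only [aux_symmDD hΓ p x₂ x₁, aux_symmDD hΓ p x₃ x₁, aux_symmDD hΓ p x₄ x₁]
  apply smul_right_injective E (by norm_num : (8:ℝ) ≠ 0)
  simp only [smul_add, smul_sub, smul_neg, smul_smul]
  norm_num [one_smul]
  simp only [show ∀ y:E, (8:ℝ)•y = (8:ℕ)•y from fun y => by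
      rw [← Nat.cast_smul_eq_nsmul ℝ]; norm_num,
    show ∀ y:E, (6:ℝ)•y = (6:ℕ)•y from fun y => by
      rw [← Nat.cast_smul_eq_nsmul ℝ]; norm_num,
    show ∀ y:E, (4:ℝ)•y = (4:ℕ)•y from fun y => by
      rw [← Nat.cast_smul_eq_nsmul ℝ]; norm_num,
    show ∀ y:E, (2:ℝ)•y = (2:ℕ)•y from fun y => by
      rw [← Nat.cast_smul_eq_nsmul ℝ]; norm_num]
  abel
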